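/- arXiv:1909.04505 — 3 statements merged into one kernel-verified Lean document; each statement's English description precedes it below -/
import Mathlib

section
/- Let v₁, v₂, v₃ be linearly independent unit vectors in ℝ³ and let C be the closed convex cone of their nonnegative linear combinations. For a unit vector u, the orthogonal projection of C onto the plane u^⊥ equals all of u^⊥ if and only if u lies in the interior of C or −u lies in the interior of C. -/
open MeasureTheory Real

/-- Covering lemma for the positive octant. -/
private lemma octant_lemma (a : Fin 3 → ℝ) :
    (∀ t : Fin 3 → ℝ, ∃ s : ℝ, ∀ i, 0 ≤ t i + s * a i) ↔
      ((∀ i, 0 < a i) ∨ (∀ i, a i < 0)) := by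
  constructor
  · intro h
    by_contra hc
    push_neg at hc
    obtain ⟨⟨i, hi⟩, ⟨j, hj⟩⟩ := hc
    obtain ⟨s, hs⟩ := h (fun _ => -1)
    rcases le_total s 0 with h0 | h0
    · have := hs j
      nlinarith
    · have := hs i
      nlinarith
  · rintro (hp | hn) t
    · refine ⟨max 0 (Finset.univ.sup' ⟨0, Finset.mem_univ 0⟩ (fun i => -t i / a i)), fun i => ?_⟩
      have h1 : -t i / a i ≤ Finset.univ.sup' ⟨0, Finset.mem_univ 0⟩ (fun i => -t i / a i) :=
        Finset.le_sup' (fun i => -t i / a i) (Finset.mem_univ i)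
      have h2 : -t i / a i ≤ max 0 (Finset.univ.sup' ⟨0, Finset.mem_univ 0⟩ (fun i => -t i / a i)) :=
        h1.trans (le_max_right _ _)
      have := (div_le_iff₀ (hp i)).mp h2
      linarith
    · refine ⟨min 0 (Finset.univ.inf' ⟨0, Finset.mem_univ 0⟩ (fun i => -t i / a i)), fun i => ?_⟩
      have h1 : Finset.univ.inf' ⟨0, Finset.mem_univ 0⟩ (fun i => -t i / a i) ≤ -t i / a i :=
        Finset.inf'_le (fun i => -t i / a i) (Finset.mem_univ i)
      have h2 : min 0 (Finset.univ.inf' ⟨0, Finset.mem_univ 0⟩ (fun i => -t i / a i)) ≤ -t i / a i :=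
        (min_le_right _ _).trans h1
      have := (le_div_iff_of_neg (hn i)).mp h2
      linarith

/-- Projection of the cone `C` generated by three linearly independent unit vectors onto
the plane `u^⊥` covers the whole plane iff `u` or `-u` lies in the interior of `C`. -/
theorem cone_projection_covers_plane_iff
    (v₁ v₂ v₃ : EuclideanSpace ℝ (Fin 3))
    (hv₁ : ‖v₁‖ = 1) (hv₂ : ‖v₂‖ = 1) (hv₃ : ‖v₃‖ = 1)
    (hli : LinearIndependent ℝ ![v₁, v₂, v₃])
    (C : Set (EuclideanSpace ℝ (Fin 3)))
    (hC : C = {x | ∃ t₁ t₂ t₃ : ℝ, 0 ≤ t₁ ∧ 0 ≤ t₂ ∧ 0 ≤ t₃ ∧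
        x = t₁ • v₁ + t₂ • v₂ + t₃ • v₃})
    (u : EuclideanSpace ℝ (Fin 3)) (hu : ‖u‖ = 1) :
    (Submodule.orthogonalProjectionOnto (ℝ ∙ u)ᗮ '' C = Set.univ)
      ↔ (u ∈ interior C ∨ -u ∈ interior C) := by
  have hcard : Fintype.card (Fin 3) = Module.finrank ℝ (EuclideanSpace ℝ (Fin 3)) := by
    simp [finrank_euclideanSpace]
  let b : Module.Basis (Fin 3) ℝ (EuclideanSpace ℝ (Fin 3)) :=
    basisOfLinearIndependentOfCardEqFinrank hli hcard
  have hb : ⇑b = ![v₁, v₂, v₃] := coe_basisOfLinearIndependentOfCardEqFinrank hli hcard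
  have h0 : b 0 = v₁ := by rw [hb]; rfl
  have h1 : b 1 = v₂ := by rw [hb]; rfl
  have h2 : b 2 = v₃ := by rw [hb]; rfl
  have hadd : ∀ (x : EuclideanSpace ℝ (Fin 3)) (s : ℝ) (i : Fin 3),
      b.repr (x + s • u) i = b.repr x i + s * b.repr u i := by
    intro x s i
    simp [map_add, LinearEquiv.map_smul]
  -- Claim A: membership in C via coordinates
  have hmem : ∀ x, x ∈ C ↔ ∀ i, 0 ≤ b.repr x i := by
    intro x
    rw [hC]
    constructor
    · rintro ⟨t₁, t₂, t₃, ht1, ht2, ht3, rfl⟩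
      have hx : t₁ • v₁ + t₂ • v₂ + t₃ • v₃ = b.equivFun.symm ![t₁, t₂, t₃] := by
        rw [Module.Basis.equivFun_symm_apply, Fin.sum_univ_three, h0, h1, h2]
        rfl
      intro i
      have hr : b.repr (t₁ • v₁ + t₂ • v₂ + t₃ • v₃) i = ![t₁, t₂, t₃] i := by
        rw [← Module.Basis.equivFun_apply, hx, b.equivFun.apply_symm_apply]
      rw [hr]
      fin_cases i <;> simpa
    · intro h
      refine ⟨b.repr x 0, b.repr x 1, b.repr x 2, h 0, h 1, h 2, ?_⟩
      have hx := b.equivFun.symm_apply_apply x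
      rw [Module.Basis.equivFun_symm_apply, Fin.sum_univ_three, h0, h1, h2] at hx
      exact hx.symm
  -- interior of C via coordinates
  have hC' : C = ⇑b.equivFunL ⁻¹' (Set.pi Set.univ fun _ => Set.Ici (0:ℝ)) := by
    ext x
    simp only [Set.mem_preimage, Set.mem_pi, Set.mem_univ, Set.mem_Ici, forall_true_left]
    exact hmem x
  have hio : interior (⇑b.equivFunL ⁻¹' (Set.pi Set.univ fun _ => Set.Ici (0:ℝ)))
      = ⇑b.equivFunL ⁻¹' interior (Set.pi Set.univ fun _ => Set.Ici (0:ℝ)) :=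
    (b.equivFunL.toHomeomorph.preimage_interior _).symm
  have hint : ∀ x, x ∈ interior C ↔ ∀ i, 0 < b.repr x i := by
    intro x
    rw [hC', hio, interior_pi_set Set.finite_univ]
    simp only [Set.mem_preimage, Set.mem_pi, Set.mem_univ, Set.mem_Ioi, forall_true_left,
      interior_Ici]
    rfl
  -- Claim C: image = univ iff C + ℝu = everything
  have hproj : (Submodule.orthogonalProjectionOnto (ℝ ∙ u)ᗮ '' C = Set.univ) ↔
      ∀ x : EuclideanSpace ℝ (Fin 3), ∃ s : ℝ, x + s • u ∈ C := by
    constructor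
    · intro h x
      have : (Submodule.orthogonalProjectionOnto (ℝ ∙ u)ᗮ x) ∈
          Submodule.orthogonalProjectionOnto (ℝ ∙ u)ᗮ '' C := h ▸ Set.mem_univ _
      obtain ⟨c, hc, hcx⟩ := this
      have hker : c - x ∈ (ℝ ∙ u) := by
        have : Submodule.orthogonalProjectionOnto (ℝ ∙ u)ᗮ (c - x) = 0 := by
          rw [map_sub, hcx, sub_self]
        rw [Submodule.orthogonalProjectionOnto_eq_zero_iff, Submodule.orthogonal_orthogonal] at this
        exact this
      obtain ⟨s, hs⟩ := Submodule.mem_span_singleton.mp hker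
      exact ⟨s, by rw [show x + s • u = c by rw [hs]; abel]; exact hc⟩
    · intro h
      ext y
      simp only [Set.mem_univ, iff_true]
      obtain ⟨s, hs⟩ := h (y : EuclideanSpace ℝ (Fin 3))
      refine ⟨(y : EuclideanSpace ℝ (Fin 3)) + s • u, hs, ?_⟩
      have hu0 : Submodule.orthogonalProjectionOnto (ℝ ∙ u)ᗮ u = 0 := by
        rw [Submodule.orthogonalProjectionOnto_eq_zero_iff, Submodule.orthogonal_orthogonal]
        exact Submodule.mem_span_singleton_self u
      rw [map_add, _root_.map_smul, hu0, smul_zero, add_zero,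
        Submodule.orthogonalProjectionOnto_mem_subspace_eq_self]
  rw [hproj]
  have hrepr_neg : ∀ i, b.repr (-u) i = -(b.repr u i) := by
    intro i; rw [map_neg]; rfl
  rw [hint u, hint (-u)]
  simp only [hrepr_neg, neg_pos]
  rw [← octant_lemma (fun i => b.repr u i)]
  constructor
  · intro h t
    obtain ⟨s, hs⟩ := h (b.equivFun.symm t)
    refine ⟨s, fun i => ?_⟩
    have := (hmem _).mp hs i
    rw [hadd] at this
    have ht : b.repr (b.equivFun.symm t) i = t i := by
      rw [← Module.Basis.equivFun_apply, b.equivFun.apply_symm_apply]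
    rwa [ht] at this
  · intro h x
    obtain ⟨s, hs⟩ := h (fun i => b.repr x i)
    refine ⟨s, (hmem _).mpr fun i => ?_⟩
    rw [hadd]
    exact hs i
end

section
/- Let v₁, v₂, v₃ be linearly independent unit vectors in ℝ³ and let C be the closed convex cone of their nonnegative linear combinations. The set of unit vectors u for which the orthogonal projection of C onto u^⊥ equals all of u^⊥ has spherical surface measure 2·σ(C ∩ S²), where σ(C ∩ S²) is the solid angle measure of C at the origin. Equivalently, for a uniformly random unit direction u, the projection covers the whole plane with probability σ(C ∩ S²)/(2π). -/
open MeasureTheory Real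
set_option maxHeartbeats 1000000

lemma exists_angle {a b : ℝ} (h : a ^ 2 + b ^ 2 = 1) : ∃ θ : ℝ, cos θ = a ∧ sin θ = b := by
  have ha : -1 ≤ a ∧ a ≤ 1 := by constructor <;> nlinarith [sq_nonneg b]
  have hsq : √(1 - a ^ 2) = |b| := by
    rw [show (1 : ℝ) - a ^ 2 = b ^ 2 by linarith, Real.sqrt_sq_eq_abs]
  rcases le_or_gt 0 b with hb | hb
  · exact ⟨arccos a, Real.cos_arccos ha.1 ha.2, by rw [Real.sin_arccos, hsq, abs_of_nonneg hb]⟩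
  · refine ⟨-arccos a, by rw [Real.cos_neg, Real.cos_arccos ha.1 ha.2], ?_⟩
    rw [Real.sin_neg, Real.sin_arccos, hsq, abs_of_neg hb, neg_neg]

lemma circle_hausdorff_zero (e₁ e₂ : EuclideanSpace ℝ (Fin 3)) (he₁ : ‖e₁‖ = 1)
    (he₂ : ‖e₂‖ = 1) (hor : inner (𝕜 := ℝ) e₁ e₂ = 0) :
    μH[2] {x : EuclideanSpace ℝ (Fin 3) |
      x ∈ Submodule.span ℝ {e₁, e₂} ∧ ‖x‖ = 1} = 0 := by
  set f : ℝ → EuclideanSpace ℝ (Fin 3) := fun θ => cos θ • e₁ + sin θ • e₂ with hf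
  have hsin : LipschitzWith 1 sin := by
    refine lipschitzWith_of_nnnorm_deriv_le Real.differentiable_sin fun x => ?_
    rw [Real.deriv_sin]
    simpa [← NNReal.coe_le_coe] using Real.abs_cos_le_one x
  have hcos : LipschitzWith 1 cos := by
    refine lipschitzWith_of_nnnorm_deriv_le Real.differentiable_cos fun x => ?_
    rw [Real.deriv_cos']
    simpa [← NNReal.coe_le_coe] using Real.abs_sin_le_one x
  have hlip : LipschitzWith 2 f := by
    refine LipschitzWith.of_dist_le_mul fun θ θ' => ?_
    have : f θ - f θ' = (cos θ - cos θ') • e₁ + (sin θ - sin θ') • e₂ := by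
      simp [hf, sub_smul]; abel
    rw [dist_eq_norm, this, dist_eq_norm]
    calc ‖(cos θ - cos θ') • e₁ + (sin θ - sin θ') • e₂‖
        ≤ ‖(cos θ - cos θ') • e₁‖ + ‖(sin θ - sin θ') • e₂‖ := norm_add_le _ _
      _ = |cos θ - cos θ'| + |sin θ - sin θ'| := by
          rw [norm_smul, norm_smul, he₁, he₂] ; simp [Real.norm_eq_abs]
      _ ≤ 1 * |θ - θ'| + 1 * |θ - θ'| := by
          gcongr ?_ + ?_
          · simpa [Real.dist_eq] using hcos.dist_le_mul θ θ'
          · simpa [Real.dist_eq] using hsin.dist_le_mul θ θ'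
      _ = 2 * ‖θ - θ'‖ := by rw [Real.norm_eq_abs]; ring
  have hsub : {x : EuclideanSpace ℝ (Fin 3) | x ∈ Submodule.span ℝ {e₁, e₂} ∧ ‖x‖ = 1}
      ⊆ f '' Set.univ := by
    rintro x ⟨hx, hnx⟩
    obtain ⟨a, b, rfl⟩ := Submodule.mem_span_pair.mp hx
    have hn2 : a ^ 2 + b ^ 2 = 1 := by
      have := norm_add_sq_real (a • e₁) (b • e₂)
      rw [hnx] at this
      simp only [norm_smul, he₁, he₂, inner_smul_left, inner_smul_right, hor,
        Real.norm_eq_abs, mul_one, mul_zero] at this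
      nlinarith [sq_abs a, sq_abs b]
    obtain ⟨θ, hc, hs⟩ := exists_angle hn2
    exact ⟨θ, trivial, by rw [hf]; simp [hc, hs]⟩
  have h0 : μH[2] (f '' Set.univ) = 0 := by
    apply hausdorffMeasure_of_dimH_lt (d := 2)
    calc dimH (f '' Set.univ) ≤ dimH (Set.univ : Set ℝ) := hlip.dimH_image_le _
      _ = 1 := Real.dimH_univ
      _ < 2 := by norm_num
  exact measure_mono_null hsub h0


lemma proj_univ_iff (C : Set (EuclideanSpace ℝ (Fin 3))) (u : EuclideanSpace ℝ (Fin 3)) :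
    Submodule.orthogonalProjectionOnto (ℝ ∙ u)ᗮ '' C = Set.univ ↔
    ∀ x : EuclideanSpace ℝ (Fin 3), ∃ c ∈ C, ∃ s : ℝ, x = c + s • u := by
  have key : ∀ z : EuclideanSpace ℝ (Fin 3),
      z - (Submodule.orthogonalProjectionOnto (ℝ ∙ u)ᗮ z : EuclideanSpace ℝ (Fin 3)) ∈ ℝ ∙ u := by
    intro z
    have := Submodule.sub_starProjection_mem_orthogonal (K := (ℝ ∙ u)ᗮ) z
    rw [Submodule.orthogonal_orthogonal] at this
    exact this
  constructor
  · intro h x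
    obtain ⟨s₀, hs₀⟩ := Submodule.mem_span_singleton.mp (key x)
    have hy : Submodule.orthogonalProjectionOnto (ℝ ∙ u)ᗮ x ∈ (Set.univ : Set ((ℝ ∙ u)ᗮ)) := trivial
    rw [← h] at hy
    obtain ⟨c, hc, hcy⟩ := hy
    obtain ⟨s₁, hs₁⟩ := Submodule.mem_span_singleton.mp (key c)
    refine ⟨c, hc, s₀ - s₁, ?_⟩
    have hx : x = (Submodule.orthogonalProjectionOnto (ℝ ∙ u)ᗮ x : EuclideanSpace ℝ (Fin 3)) + s₀ • u := by
      rw [hs₀]; abel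
    have hcc : (Submodule.orthogonalProjectionOnto (ℝ ∙ u)ᗮ c : EuclideanSpace ℝ (Fin 3)) = c - s₁ • u := by
      rw [hs₁]; abel
    have hpc : (Submodule.orthogonalProjectionOnto (ℝ ∙ u)ᗮ c : EuclideanSpace ℝ (Fin 3))
        = (Submodule.orthogonalProjectionOnto (ℝ ∙ u)ᗮ x : EuclideanSpace ℝ (Fin 3)) := congrArg _ hcy
    rw [hx, ← hpc, hcc, sub_smul]
    abel
  · intro h
    refine Set.eq_univ_of_forall fun y => ?_
    obtain ⟨c, hc, s, hcs⟩ := h (y : EuclideanSpace ℝ (Fin 3))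
    refine ⟨c, hc, ?_⟩
    have hc2 : c = (y : EuclideanSpace ℝ (Fin 3)) + (-s) • u := by
      rw [hcs, neg_smul]; abel
    have hu : (-s) • u ∈ ((ℝ ∙ u)ᗮ)ᗮ := by
      rw [Submodule.orthogonal_orthogonal]
      exact Submodule.smul_mem _ _ (Submodule.mem_span_singleton_self u)
    rw [hc2, map_add, Submodule.orthogonalProjectionOnto_mem_subspace_eq_self y,
      Submodule.orthogonalProjectionOnto_apply_of_mem_orthogonal hu, add_zero]


lemma cover_of_pos (b : Module.Basis (Fin 3) ℝ (EuclideanSpace ℝ (Fin 3)))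
    (C : Set (EuclideanSpace ℝ (Fin 3)))
    (hC : ∀ x, (∃ t : Fin 3 → ℝ, (∀ k, 0 ≤ t k) ∧ x = ∑ k, t k • b k) → x ∈ C)
    (u : EuclideanSpace ℝ (Fin 3)) (hpos : ∀ k, 0 < b.repr u k) :
    ∀ x, ∃ c ∈ C, ∃ s : ℝ, x = c + s • u := by
  intro x
  set s : ℝ := Finset.univ.inf' (Finset.univ_nonempty) (fun k => b.repr x k / b.repr u k)
    with hs
  set t : Fin 3 → ℝ := fun k => b.repr x k - s * b.repr u k with ht
  have htnn : ∀ k, 0 ≤ t k := by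
    intro k
    have h1 : s ≤ b.repr x k / b.repr u k := Finset.inf'_le _ (Finset.mem_univ k)
    have h2 : s * b.repr u k ≤ b.repr x k := by
      rw [← le_div_iff₀ (hpos k)]; exact h1
    simp only [ht, sub_nonneg, h2]
  refine ⟨∑ k, t k • b k, hC _ ⟨t, htnn, rfl⟩, s, ?_⟩
  have hrx : ∑ k, b.repr x k • b k = x := b.sum_repr x
  have hru : ∑ k, b.repr u k • b k = u := b.sum_repr u
  calc x = ∑ k, b.repr x k • b k := hrx.symm
    _ = (∑ k, (b.repr x k - s * b.repr u k) • b k) + s • ∑ k, b.repr u k • b k := by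
        rw [Finset.smul_sum, ← Finset.sum_add_distrib]
        congr 1; funext k
        rw [sub_smul, mul_smul, smul_smul]  -- may need fixing
        abel
    _ = (∑ k, t k • b k) + s • u := by rw [hru]

lemma pos_or_neg_of_cover (b : Module.Basis (Fin 3) ℝ (EuclideanSpace ℝ (Fin 3)))
    (C : Set (EuclideanSpace ℝ (Fin 3)))
    (hC : ∀ x, x ∈ C → ∃ t : Fin 3 → ℝ, (∀ k, 0 ≤ t k) ∧ x = ∑ k, t k • b k)
    (u : EuclideanSpace ℝ (Fin 3))
    (h : ∀ x, ∃ c ∈ C, ∃ s : ℝ, x = c + s • u) :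
    (∀ k, 0 < b.repr u k) ∨ (∀ k, b.repr u k < 0) := by
  by_contra hcon
  push_neg at hcon
  obtain ⟨⟨i, hi⟩, ⟨j, hj⟩⟩ := hcon
  obtain ⟨c, hc, s, hx⟩ := h (-(b i) - (b j))
  obtain ⟨t, htnn, rfl⟩ := hC c hc
  have hrepr : ∀ k, (-(if i = k then (1:ℝ) else 0)) - (if j = k then (1:ℝ) else 0)
      = t k + s * b.repr u k := by
    intro k
    have h1 := congrArg (fun z => (b.repr z) k) hx
    simp only [map_sub, map_neg, map_add, _root_.map_smul, Finsupp.sub_apply,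
      Finsupp.neg_apply, Finsupp.add_apply, Finsupp.smul_apply, smul_eq_mul,
      Module.Basis.repr_self, Finsupp.single_apply] at h1
    rw [congrFun (b.repr_sum_self t) k] at h1
    exact h1
  have hri := hrepr i
  have hrj := hrepr j
  have hsi : s * b.repr u i ≤ -1 := by
    have := htnn i
    rw [if_pos rfl] at hri
    split_ifs at hri <;> linarith
  have hsj : s * b.repr u j ≤ -1 := by
    have := htnn j
    rw [if_pos rfl] at hrj
    split_ifs at hrj <;> linarith
  have hspos : 0 < s := by
    by_contra hsle
    push_neg at hsle
    nlinarith
  nlinarith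

lemma span_pair_sphere_zero (w₁ w₂ : EuclideanSpace ℝ (Fin 3)) (hw₁ : ‖w₁‖ = 1)
    (hnc : ∀ c : ℝ, w₂ ≠ c • w₁) :
    μH[2] {x : EuclideanSpace ℝ (Fin 3) |
      x ∈ Submodule.span ℝ {w₁, w₂} ∧ ‖x‖ = 1} = 0 := by
  set z : EuclideanSpace ℝ (Fin 3) := w₂ - (inner (𝕜 := ℝ) w₁ w₂) • w₁ with hz
  have hzne : z ≠ 0 := by
    intro h0
    exact hnc (inner (𝕜 := ℝ) w₁ w₂) (by rw [← sub_eq_zero]; exact h0)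
  have hnz : ‖z‖ ≠ 0 := norm_ne_zero_iff.mpr hzne
  set e₂ : EuclideanSpace ℝ (Fin 3) := ‖z‖⁻¹ • z with he₂def
  have he₂ : ‖e₂‖ = 1 := by
    rw [he₂def, norm_smul, norm_inv, norm_norm, inv_mul_cancel₀ hnz]
  have horz : inner (𝕜 := ℝ) w₁ z = 0 := by
    rw [hz, inner_sub_right, real_inner_smul_right, real_inner_self_eq_norm_sq, hw₁]
    ring
  have hor : inner (𝕜 := ℝ) w₁ e₂ = 0 := by
    rw [he₂def, real_inner_smul_right, horz, mul_zero]
  refine measure_mono_null ?_ (circle_hausdorff_zero w₁ e₂ hw₁ he₂ hor)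
  rintro x ⟨hx, hnx⟩
  refine ⟨?_, hnx⟩
  have hw2mem : w₂ ∈ Submodule.span ℝ {w₁, e₂} := by
    refine Submodule.mem_span_pair.mpr ⟨inner (𝕜 := ℝ) w₁ w₂, ‖z‖, ?_⟩
    rw [he₂def, smul_smul, mul_inv_cancel₀ hnz, one_smul, hz]
    abel
  have hsub : Submodule.span ℝ {w₁, w₂} ≤ Submodule.span ℝ {w₁, e₂} := by
    rw [Submodule.span_le]
    rintro y (rfl | rfl)
    · exact Submodule.subset_span (Set.mem_insert _ _)
    · exact hw2mem
  exact hsub hx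

lemma not_collinear (v₁ v₂ v₃ : EuclideanSpace ℝ (Fin 3))
    (hli : LinearIndependent ℝ ![v₁, v₂, v₃]) (i j : Fin 3) (hij : i ≠ j) :
    ∀ c : ℝ, ![v₁, v₂, v₃] j ≠ c • ![v₁, v₂, v₃] i := by
  intro c hEq
  have hinj : Function.Injective (![i, j] : Fin 2 → Fin 3) := by
    intro a b hab
    fin_cases a <;> fin_cases b <;> simp_all <;> exact absurd hab.symm hij <;> exact absurd hab hij
  have hpair : LinearIndependent ℝ (![v₁, v₂, v₃] ∘ ![i, j]) := hli.comp _ hinj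
  have h01 : (![v₁, v₂, v₃] ∘ ![i, j]) 0 = ![v₁, v₂, v₃] i := rfl
  have h11 : (![v₁, v₂, v₃] ∘ ![i, j]) 1 = ![v₁, v₂, v₃] j := rfl
  have hpair2 : LinearIndependent ℝ ![![v₁, v₂, v₃] i, ![v₁, v₂, v₃] j] := by
    convert hpair using 1
    funext k
    fin_cases k <;> simp [h01, h11]
  have := (LinearIndependent.pair_iff.mp hpair2 (-c) 1 (by rw [hEq]; simp)).2
  norm_num at this

/-- The set of unit directions `u` for which the projection of the cone `C` onto `u^⊥`
covers the whole plane has spherical surface measure `2 σ(C ∩ S²)`; equivalently the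
projection covers the plane with probability `σ(C ∩ S²)/(2π)` for a uniformly random
direction. -/
theorem measure_directions_projection_covers_plane
    (v₁ v₂ v₃ : EuclideanSpace ℝ (Fin 3))
    (hv₁ : ‖v₁‖ = 1) (hv₂ : ‖v₂‖ = 1) (hv₃ : ‖v₃‖ = 1)
    (hli : LinearIndependent ℝ ![v₁, v₂, v₃])
    (C : Set (EuclideanSpace ℝ (Fin 3)))
    (hC : C = {x | ∃ t₁ t₂ t₃ : ℝ, 0 ≤ t₁ ∧ 0 ≤ t₂ ∧ 0 ≤ t₃ ∧
        x = t₁ • v₁ + t₂ • v₂ + t₃ • v₃}) :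
    μH[2] {u : EuclideanSpace ℝ (Fin 3) |
        u ∈ Metric.sphere (0 : EuclideanSpace ℝ (Fin 3)) 1 ∧
        Submodule.orthogonalProjectionOnto (ℝ ∙ u)ᗮ '' C = Set.univ}
      = 2 * μH[2] (C ∩ Metric.sphere (0 : EuclideanSpace ℝ (Fin 3)) 1) := by
  classical
  have hcard : Fintype.card (Fin 3) = Module.finrank ℝ (EuclideanSpace ℝ (Fin 3)) := by
    simp [finrank_euclideanSpace_fin]
  set b := basisOfLinearIndependentOfCardEqFinrank hli hcard with hbdef
  have hb : ⇑b = ![v₁, v₂, v₃] := coe_basisOfLinearIndependentOfCardEqFinrank _ _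
  have hCmem : ∀ x, x ∈ C ↔ ∃ t : Fin 3 → ℝ, (∀ k, 0 ≤ t k) ∧ x = ∑ k, t k • b k := by
    intro x; rw [hC]
    constructor
    · rintro ⟨t₁, t₂, t₃, h1, h2, h3, rfl⟩
      refine ⟨![t₁, t₂, t₃], ?_, ?_⟩
      · intro k; fin_cases k <;> assumption
      · rw [Fin.sum_univ_three]; simp [hb]
    · rintro ⟨t, ht, rfl⟩
      refine ⟨t 0, t 1, t 2, ht 0, ht 1, ht 2, ?_⟩
      rw [Fin.sum_univ_three]; simp [hb]
  set S := Metric.sphere (0 : EuclideanSpace ℝ (Fin 3)) 1 with hSdef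
  set P : Set (EuclideanSpace ℝ (Fin 3)) := {u | ∀ k, 0 < b.repr u k} with hPdef
  set N : Set (EuclideanSpace ℝ (Fin 3)) := {u | ∀ k, b.repr u k < 0} with hNdef
  have hcont : ∀ k : Fin 3, Continuous fun u : EuclideanSpace ℝ (Fin 3) => b.repr u k := by
    intro k
    have := LinearMap.continuous_of_finiteDimensional (b.coord k)
    convert this using 1
    funext u
    exact (Module.Basis.coord_apply b k u).symm
  have hPopen : IsOpen P := by
    have : P = ⋂ k, (fun u : EuclideanSpace ℝ (Fin 3) => b.repr u k) ⁻¹' Set.Ioi 0 := by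
      ext u; simp [hPdef]
    rw [this]
    exact isOpen_iInter_of_finite fun k => isOpen_Ioi.preimage (hcont k)
  have hNopen : IsOpen N := by
    have : N = ⋂ k, (fun u : EuclideanSpace ℝ (Fin 3) => b.repr u k) ⁻¹' Set.Iio 0 := by
      ext u; simp [hNdef]
    rw [this]
    exact isOpen_iInter_of_finite fun k => isOpen_Iio.preimage (hcont k)
  have hsets : {u : EuclideanSpace ℝ (Fin 3) | u ∈ S ∧
      Submodule.orthogonalProjectionOnto (ℝ ∙ u)ᗮ '' C = Set.univ} = (P ∩ S) ∪ (N ∩ S) := by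
    ext u
    constructor
    · rintro ⟨hS, himg⟩
      have hcov := (proj_univ_iff C u).mp himg
      rcases pos_or_neg_of_cover b C (fun x hx => (hCmem x).mp hx) u hcov with h | h
      · exact Or.inl ⟨h, hS⟩
      · exact Or.inr ⟨h, hS⟩
    · rintro (⟨hP, hS⟩ | ⟨hN, hS⟩)
      · exact ⟨hS, (proj_univ_iff C u).mpr
          (cover_of_pos b C (fun x hx => (hCmem x).mpr hx) u hP)⟩
      · refine ⟨hS, (proj_univ_iff C u).mpr ?_⟩
        have hposneg : ∀ k, 0 < b.repr (-u) k := by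
          intro k
          rw [map_neg, Finsupp.neg_apply]
          exact neg_pos.mpr (hN k)
        intro x
        obtain ⟨c, hc, s, hcs⟩ :=
          cover_of_pos b C (fun x hx => (hCmem x).mpr hx) (-u) hposneg x
        exact ⟨c, hc, -s, by rw [hcs, smul_neg, neg_smul]⟩
  have hNS_meas : MeasurableSet (N ∩ S) :=
    (hNopen.measurableSet).inter Metric.isClosed_sphere.measurableSet
  have hdisj : Disjoint (P ∩ S) (N ∩ S) := by
    refine Set.disjoint_left.mpr ?_
    rintro u ⟨hP, _⟩ ⟨hN, _⟩
    exact absurd (hP 0) (not_lt.mpr (le_of_lt (hN 0)))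
  have hnegiso : Isometry (fun x : EuclideanSpace ℝ (Fin 3) => -x) := fun x y => by
    rw [edist_neg_neg]
  have hneg : N ∩ S = (fun x : EuclideanSpace ℝ (Fin 3) => -x) '' (P ∩ S) := by
    ext x
    constructor
    · rintro ⟨hN, hS⟩
      refine ⟨-x, ⟨?_, ?_⟩, by simp⟩
      · intro k
        rw [map_neg, Finsupp.neg_apply]
        exact neg_pos.mpr (hN k)
      · rw [hSdef, mem_sphere_zero_iff_norm, norm_neg]
        exact mem_sphere_zero_iff_norm.mp hS
    · rintro ⟨y, ⟨hP, hS⟩, rfl⟩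
      constructor
      · intro k
        rw [map_neg, Finsupp.neg_apply]
        exact neg_neg_iff_pos.mpr (hP k)
      · rw [hSdef, mem_sphere_zero_iff_norm, norm_neg]
        exact mem_sphere_zero_iff_norm.mp hS
  have hmeq : μH[2] (N ∩ S) = μH[2] (P ∩ S) := by
    rw [hneg]
    exact hnegiso.hausdorffMeasure_image (Or.inl (by norm_num)) _
  have hPC : P ∩ S ⊆ C ∩ S := by
    rintro u ⟨hP, hS⟩
    exact ⟨(hCmem u).mpr ⟨fun k => b.repr u k, fun k => le_of_lt (hP k),
      (b.sum_repr u).symm⟩, hS⟩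
  set Z₀ : Set (EuclideanSpace ℝ (Fin 3)) :=
    {x | x ∈ Submodule.span ℝ {v₂, v₃} ∧ ‖x‖ = 1} with hZ₀def
  set Z₁ : Set (EuclideanSpace ℝ (Fin 3)) :=
    {x | x ∈ Submodule.span ℝ {v₁, v₃} ∧ ‖x‖ = 1} with hZ₁def
  set Z₂ : Set (EuclideanSpace ℝ (Fin 3)) :=
    {x | x ∈ Submodule.span ℝ {v₁, v₂} ∧ ‖x‖ = 1} with hZ₂def
  have hZ0 : μH[2] Z₀ = 0 := by
    refine span_pair_sphere_zero v₂ v₃ hv₂ fun c => ?_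
    have := not_collinear v₁ v₂ v₃ hli 1 2 (by decide) c
    simpa using this
  have hZ1 : μH[2] Z₁ = 0 := by
    refine span_pair_sphere_zero v₁ v₃ hv₁ fun c => ?_
    have := not_collinear v₁ v₂ v₃ hli 0 2 (by decide) c
    simpa using this
  have hZ2 : μH[2] Z₂ = 0 := by
    refine span_pair_sphere_zero v₁ v₂ hv₁ fun c => ?_
    have := not_collinear v₁ v₂ v₃ hli 0 1 (by decide) c
    simpa using this
  have hCsub : C ∩ S ⊆ (P ∩ S) ∪ (Z₀ ∪ Z₁ ∪ Z₂) := by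
    rintro x ⟨hxC, hxS⟩
    by_cases hxP : x ∈ P
    · exact Or.inl ⟨hxP, hxS⟩
    right
    obtain ⟨t, ht, rfl⟩ := (hCmem x).mp hxC
    have hreprx : ∀ k, b.repr (∑ k, t k • b k) k = t k :=
      fun k => congrFun (b.repr_sum_self t) k
    rw [hPdef, Set.mem_setOf_eq, not_forall] at hxP
    obtain ⟨k, hk⟩ := hxP
    have htk : t k = 0 := le_antisymm (by rw [← hreprx k]; exact not_lt.mp hk) (ht k)
    have hxnorm : ‖∑ k, t k • b k‖ = 1 := mem_sphere_zero_iff_norm.mp hxS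
    have hsum : ∑ k, t k • b k = t 0 • v₁ + t 1 • v₂ + t 2 • v₃ := by
      rw [Fin.sum_univ_three]; simp [hb]
    fin_cases k
    · refine Or.inl (Or.inl ⟨Submodule.mem_span_pair.mpr ⟨t 1, t 2, ?_⟩, hxnorm⟩)
      rw [hsum]
      have h0 : t 0 = 0 := htk
      rw [h0, zero_smul, zero_add]
    · refine Or.inl (Or.inr ⟨Submodule.mem_span_pair.mpr ⟨t 0, t 2, ?_⟩, hxnorm⟩)
      rw [hsum]
      have h1 : t 1 = 0 := htk
      rw [h1, zero_smul, add_zero]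
    · refine Or.inr ⟨Submodule.mem_span_pair.mpr ⟨t 0, t 1, ?_⟩, hxnorm⟩
      rw [hsum]
      have h2 : t 2 = 0 := htk
      rw [h2, zero_smul, add_zero]
  have hCP : μH[2] (C ∩ S) = μH[2] (P ∩ S) := by
    refine le_antisymm ?_ (measure_mono hPC)
    calc μH[2] (C ∩ S) ≤ μH[2] ((P ∩ S) ∪ (Z₀ ∪ Z₁ ∪ Z₂)) := measure_mono hCsub
      _ ≤ μH[2] (P ∩ S) + μH[2] (Z₀ ∪ Z₁ ∪ Z₂) := measure_union_le _ _
      _ = μH[2] (P ∩ S) := by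
          rw [measure_union_null (measure_union_null hZ0 hZ1) hZ2, add_zero]
  rw [hsets, measure_union hdisj hNS_meas, hmeq, hCP, two_mul]
end

section
/- Let v₁, v₂, v₃ be linearly independent unit vectors in ℝ³ and let C be the closed convex cone of their nonnegative linear combinations. For almost every unit vector u (with respect to the spherical surface measure), exactly one of the following holds: the orthogonal projection of C onto u^⊥ equals all of u^⊥, or there exist linearly independent vectors w₁, w₂ ∈ u^⊥ such that the projection of C onto u^⊥ equals {s w₁ + t w₂ : s, t ≥ 0}. In other words, almost surely the projected figure is either the whole plane (0 vertices, 0 edges) or a planar convex cone with exactly one vertex and two edges, so the number of edges is almost surely twice the number of vertices. -/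
open MeasureTheory Real

section ConeLemmas
variable {V : Type*} [AddCommGroup V] [Module ℝ V]

def coneSet3 (e₁ e₂ e₃ : V) : Set V :=
  {x | ∃ t₁ t₂ t₃ : ℝ, 0 ≤ t₁ ∧ 0 ≤ t₂ ∧ 0 ≤ t₃ ∧ x = t₁ • e₁ + t₂ • e₂ + t₃ • e₃}

lemma li3_iff (x y z : V) : LinearIndependent ℝ ![x, y, z] ↔
    ∀ p q r : ℝ, p • x + q • y + r • z = 0 → p = 0 ∧ q = 0 ∧ r = 0 := by
  rw [Fintype.linearIndependent_iff]
  constructor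
  · intro h p q r hpqr
    have := h ![p, q, r] (by simpa [Fin.sum_univ_three] using hpqr)
    exact ⟨this 0, this 1, this 2⟩
  · intro h g hg i
    have := h (g 0) (g 1) (g 2) (by simpa [Fin.sum_univ_three] using hg)
    fin_cases i
    · exact this.1
    · exact this.2.1
    · exact this.2.2

lemma pair_swap {x y : V} (h : LinearIndependent ℝ ![x, y]) :
    LinearIndependent ℝ ![y, x] := by
  rw [LinearIndependent.pair_iff] at h ⊢
  intro s t hst
  have := h t s (by rwa [add_comm])
  exact ⟨this.2, this.1⟩

lemma cone2_ne_univ {w₁ w₂ : V} (h : LinearIndependent ℝ ![w₁, w₂]) :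
    {x : V | ∃ s t : ℝ, 0 ≤ s ∧ 0 ≤ t ∧ x = s • w₁ + t • w₂} ≠ Set.univ := by
  intro hEq
  obtain ⟨s, t, hs, ht, hx⟩ := Set.eq_univ_iff_forall.mp hEq (-(w₁ + w₂))
  have h0 : (s + 1) • w₁ + (t + 1) • w₂ = (s • w₁ + t • w₂) + (w₁ + w₂) := by module
  rw [← hx] at h0
  simp only [neg_add_cancel] at h0
  have := (LinearIndependent.pair_iff.mp h) _ _ h0
  linarith [this.1]

lemma coneSet3_swap23 (e₁ e₂ e₃ : V) : coneSet3 e₁ e₂ e₃ = coneSet3 e₁ e₃ e₂ := by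
  ext x
  constructor <;> rintro ⟨t₁, t₂, t₃, h₁, h₂, h₃, rfl⟩ <;>
    exact ⟨t₁, t₃, t₂, h₁, h₃, h₂, by module⟩

lemma coneSet3_rot (e₁ e₂ e₃ : V) : coneSet3 e₁ e₂ e₃ = coneSet3 e₂ e₃ e₁ := by
  ext x
  constructor
  · rintro ⟨t₁, t₂, t₃, h₁, h₂, h₃, rfl⟩
    exact ⟨t₂, t₃, t₁, h₂, h₃, h₁, by module⟩
  · rintro ⟨t₁, t₂, t₃, h₁, h₂, h₃, rfl⟩
    exact ⟨t₃, t₁, t₂, h₃, h₁, h₂, by module⟩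

lemma coneSet3_eq_cone2 (e₁ e₂ e₃ : V) (c₁ c₂ : ℝ) (hc₁ : 0 ≤ c₁) (hc₂ : 0 ≤ c₂)
    (he₃ : e₃ = c₁ • e₁ + c₂ • e₂) :
    coneSet3 e₁ e₂ e₃ = {x : V | ∃ s t : ℝ, 0 ≤ s ∧ 0 ≤ t ∧ x = s • e₁ + t • e₂} := by
  subst he₃
  ext x
  constructor
  · rintro ⟨t₁, t₂, t₃, h₁, h₂, h₃, rfl⟩
    exact ⟨t₁ + t₃ * c₁, t₂ + t₃ * c₂, by positivity, by positivity, by module⟩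
  · rintro ⟨s, t, hs, ht, rfl⟩
    exact ⟨s, t, 0, hs, ht, le_refl 0, by module⟩

lemma coneSet3_dep3 [NoZeroSMulDivisors ℝ V] (e₁ e₂ e₃ : V) (a₁ a₂ a₃ : ℝ) (ha₃ : a₃ ≠ 0)
    (hc₁ : a₁ / a₃ ≤ 0) (hc₂ : a₂ / a₃ ≤ 0) (hsum : a₁ • e₁ + a₂ • e₂ + a₃ • e₃ = 0) :
    coneSet3 e₁ e₂ e₃ = {x : V | ∃ s t : ℝ, 0 ≤ s ∧ 0 ≤ t ∧ x = s • e₁ + t • e₂} := by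
  apply coneSet3_eq_cone2 e₁ e₂ e₃ (-(a₁ / a₃)) (-(a₂ / a₃)) (by linarith) (by linarith)
  apply smul_right_injective V ha₃
  have h1 : a₃ * -(a₁ / a₃) = -a₁ := by field_simp
  have h2 : a₃ * -(a₂ / a₃) = -a₂ := by field_simp
  calc a₃ • e₃ = -(a₁ • e₁) - a₂ • e₂ + (a₁ • e₁ + a₂ • e₂ + a₃ • e₃) := by module
    _ = -(a₁ • e₁) - a₂ • e₂ := by rw [hsum, add_zero]
    _ = (a₃ * -(a₁ / a₃)) • e₁ + (a₃ * -(a₂ / a₃)) • e₂ := by rw [h1, h2]; module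
    _ = a₃ • (-(a₁ / a₃) • e₁ + -(a₂ / a₃) • e₂) := by module

lemma coneSet3_eq_univ [FiniteDimensional ℝ V] (h2 : Module.finrank ℝ V = 2)
    (e₁ e₂ e₃ : V) (a₁ a₂ a₃ : ℝ) (ha₁ : 0 < a₁) (ha₂ : 0 < a₂) (ha₃ : 0 < a₃)
    (hsum : a₁ • e₁ + a₂ • e₂ + a₃ • e₃ = 0)
    (h12 : LinearIndependent ℝ ![e₁, e₂]) :
    coneSet3 e₁ e₂ e₃ = Set.univ := by
  have hcard : Fintype.card (Fin 2) = Module.finrank ℝ V := by simp [h2]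
  let b := basisOfLinearIndependentOfCardEqFinrank h12 hcard
  refine Set.eq_univ_iff_forall.mpr fun x => ?_
  have hb0 : b 0 = e₁ := by
    rw [show ⇑b = ![e₁, e₂] from coe_basisOfLinearIndependentOfCardEqFinrank h12 hcard]
    rfl
  have hb1 : b 1 = e₂ := by
    rw [show ⇑b = ![e₁, e₂] from coe_basisOfLinearIndependentOfCardEqFinrank h12 hcard]
    rfl
  have hx : b.repr x 0 • e₁ + b.repr x 1 • e₂ = x := by
    have := b.sum_repr x
    rwa [Fin.sum_univ_two, hb0, hb1] at this
  set c₁ := b.repr x 0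
  set c₂ := b.repr x 1
  set lam := max 0 (max ((-c₁) / a₁) ((-c₂) / a₂)) with hlam
  have hlam0 : 0 ≤ lam := le_max_left _ _
  have hl1 : -c₁ ≤ lam * a₁ := by
    have h : (-c₁) / a₁ ≤ lam := le_trans (le_max_left _ _) (le_max_right _ _)
    rw [div_le_iff₀ ha₁] at h
    linarith
  have hl2 : -c₂ ≤ lam * a₂ := by
    have h : (-c₂) / a₂ ≤ lam := le_trans (le_max_right _ _) (le_max_right _ _)
    rw [div_le_iff₀ ha₂] at h
    linarith
  refine ⟨c₁ + lam * a₁, c₂ + lam * a₂, lam * a₃, by linarith, by linarith, by positivity, ?_⟩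
  have key : (c₁ + lam * a₁) • e₁ + (c₂ + lam * a₂) • e₂ + (lam * a₃) • e₃
      = (c₁ • e₁ + c₂ • e₂) + lam • (a₁ • e₁ + a₂ • e₂ + a₃ • e₃) := by module
  rw [hsum, smul_zero, add_zero, hx] at key
  exact key.symm

lemma coneXor [FiniteDimensional ℝ V] [NoZeroSMulDivisors ℝ V] (h2 : Module.finrank ℝ V = 2)
    (e₁ e₂ e₃ : V) (a₁ a₂ a₃ : ℝ) (ha₁ : a₁ ≠ 0) (ha₂ : a₂ ≠ 0) (ha₃ : a₃ ≠ 0)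
    (hsum : a₁ • e₁ + a₂ • e₂ + a₃ • e₃ = 0)
    (h12 : LinearIndependent ℝ ![e₁, e₂]) (h13 : LinearIndependent ℝ ![e₁, e₃])
    (h23 : LinearIndependent ℝ ![e₂, e₃]) :
    Xor' (coneSet3 e₁ e₂ e₃ = Set.univ)
      (∃ w₁ w₂ : V, LinearIndependent ℝ ![w₁, w₂] ∧
        coneSet3 e₁ e₂ e₃ = {x : V | ∃ s t : ℝ, 0 ≤ s ∧ 0 ≤ t ∧ x = s • w₁ + t • w₂}) := by
  have mkA : coneSet3 e₁ e₂ e₃ = Set.univ → Xor' (coneSet3 e₁ e₂ e₃ = Set.univ)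
      (∃ w₁ w₂ : V, LinearIndependent ℝ ![w₁, w₂] ∧
        coneSet3 e₁ e₂ e₃ = {x : V | ∃ s t : ℝ, 0 ≤ s ∧ 0 ≤ t ∧ x = s • w₁ + t • w₂}) := by
    intro hA
    refine Or.inl ⟨hA, ?_⟩
    rintro ⟨w₁, w₂, hw, hEq⟩
    exact cone2_ne_univ hw (hEq.symm.trans hA)
  have mkB : (∃ w₁ w₂ : V, LinearIndependent ℝ ![w₁, w₂] ∧
      coneSet3 e₁ e₂ e₃ = {x : V | ∃ s t : ℝ, 0 ≤ s ∧ 0 ≤ t ∧ x = s • w₁ + t • w₂}) →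
      Xor' (coneSet3 e₁ e₂ e₃ = Set.univ)
      (∃ w₁ w₂ : V, LinearIndependent ℝ ![w₁, w₂] ∧
        coneSet3 e₁ e₂ e₃ = {x : V | ∃ s t : ℝ, 0 ≤ s ∧ 0 ≤ t ∧ x = s • w₁ + t • w₂}) := by
    intro hB
    refine Or.inr ⟨hB, ?_⟩
    intro hA
    obtain ⟨w₁, w₂, hw, hEq⟩ := hB
    exact cone2_ne_univ hw (hEq.symm.trans hA)
  have hsum' : a₂ • e₂ + a₃ • e₃ + a₁ • e₁ = 0 := by
    calc a₂ • e₂ + a₃ • e₃ + a₁ • e₁ = a₁ • e₁ + a₂ • e₂ + a₃ • e₃ := by module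
      _ = 0 := hsum
  have hsum'' : a₁ • e₁ + a₃ • e₃ + a₂ • e₂ = 0 := by
    calc a₁ • e₁ + a₃ • e₃ + a₂ • e₂ = a₁ • e₁ + a₂ • e₂ + a₃ • e₃ := by module
      _ = 0 := hsum
  rcases ha₁.lt_or_gt with h₁ | h₁ <;> rcases ha₂.lt_or_gt with h₂ | h₂ <;>
    rcases ha₃.lt_or_gt with h₃ | h₃
  -- (-,-,-)
  · apply mkA
    have hsumn : (-a₁) • e₁ + (-a₂) • e₂ + (-a₃) • e₃ = 0 := by
      calc (-a₁) • e₁ + (-a₂) • e₂ + (-a₃) • e₃ = -(a₁ • e₁ + a₂ • e₂ + a₃ • e₃) := by module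
        _ = 0 := by rw [hsum, neg_zero]
    exact coneSet3_eq_univ h2 e₁ e₂ e₃ (-a₁) (-a₂) (-a₃)
      (by linarith) (by linarith) (by linarith) hsumn h12
  -- (-,-,+): dep 3
  · apply mkB
    exact ⟨e₁, e₂, h12, coneSet3_dep3 e₁ e₂ e₃ a₁ a₂ a₃ ha₃
      (div_nonpos_of_nonpos_of_nonneg h₁.le h₃.le)
      (div_nonpos_of_nonpos_of_nonneg h₂.le h₃.le) hsum⟩
  -- (-,+,-): dep 2
  · apply mkB
    refine ⟨e₁, e₃, h13, (coneSet3_swap23 e₁ e₂ e₃).trans ?_⟩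
    exact coneSet3_dep3 e₁ e₃ e₂ a₁ a₃ a₂ ha₂
      (div_nonpos_of_nonpos_of_nonneg h₁.le h₂.le)
      (div_nonpos_of_nonpos_of_nonneg h₃.le h₂.le) hsum''
  -- (-,+,+): dep 1
  · apply mkB
    refine ⟨e₂, e₃, h23, (coneSet3_rot e₁ e₂ e₃).trans ?_⟩
    exact coneSet3_dep3 e₂ e₃ e₁ a₂ a₃ a₁ ha₁
      (div_nonpos_of_nonneg_of_nonpos h₂.le h₁.le)
      (div_nonpos_of_nonneg_of_nonpos h₃.le h₁.le) hsum'
  -- (+,-,-): dep 1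
  · apply mkB
    refine ⟨e₂, e₃, h23, (coneSet3_rot e₁ e₂ e₃).trans ?_⟩
    exact coneSet3_dep3 e₂ e₃ e₁ a₂ a₃ a₁ ha₁
      (div_nonpos_of_nonpos_of_nonneg h₂.le h₁.le)
      (div_nonpos_of_nonpos_of_nonneg h₃.le h₁.le) hsum'
  -- (+,-,+): dep 2
  · apply mkB
    refine ⟨e₁, e₃, h13, (coneSet3_swap23 e₁ e₂ e₃).trans ?_⟩
    exact coneSet3_dep3 e₁ e₃ e₂ a₁ a₃ a₂ ha₂
      (div_nonpos_of_nonneg_of_nonpos h₁.le h₂.le)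
      (div_nonpos_of_nonneg_of_nonpos h₃.le h₂.le) hsum''
  -- (+,+,-): dep 3
  · apply mkB
    exact ⟨e₁, e₂, h12, coneSet3_dep3 e₁ e₂ e₃ a₁ a₂ a₃ ha₃
      (div_nonpos_of_nonneg_of_nonpos h₁.le h₃.le)
      (div_nonpos_of_nonneg_of_nonpos h₂.le h₃.le) hsum⟩
  -- (+,+,+)
  · exact mkA (coneSet3_eq_univ h2 e₁ e₂ e₃ a₁ a₂ a₃ h₁ h₂ h₃ hsum h12)

end ConeLemmas


lemma lipschitz_cos : LipschitzWith 1 Real.cos := by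
  apply lipschitzWith_of_nnnorm_deriv_le Real.differentiable_cos
  intro x
  have h : ‖deriv Real.cos x‖ ≤ 1 := by
    rw [Real.deriv_cos]
    rw [Real.norm_eq_abs, abs_neg]
    exact Real.abs_sin_le_one x
  exact_mod_cast h

lemma lipschitz_sin : LipschitzWith 1 Real.sin := by
  apply lipschitzWith_of_nnnorm_deriv_le Real.differentiable_sin
  intro x
  have h : ‖deriv Real.sin x‖ ≤ 1 := by
    rw [Real.deriv_sin, Real.norm_eq_abs]
    exact Real.abs_cos_le_one x
  exact_mod_cast h

lemma circle_null (W : Submodule ℝ (EuclideanSpace ℝ (Fin 3)))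
    (hW : Module.finrank ℝ W = 2) :
    μH[2] ((W : Set (EuclideanSpace ℝ (Fin 3))) ∩ Metric.sphere 0 1) = 0 := by
  classical
  let o : OrthonormalBasis (Fin 2) ℝ W := (stdOrthonormalBasis ℝ W).reindex (finCongr hW)
  set w0 : EuclideanSpace ℝ (Fin 3) := (o 0 : EuclideanSpace ℝ (Fin 3)) with hw0
  set w1 : EuclideanSpace ℝ (Fin 3) := (o 1 : EuclideanSpace ℝ (Fin 3)) with hw1
  set φ : ℝ → EuclideanSpace ℝ (Fin 3) :=
    fun θ => Real.cos θ • w0 + Real.sin θ • w1 with hφ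
  -- Lipschitz
  have l0 : LipschitzWith (‖ContinuousLinearMap.toSpanSingleton ℝ w0‖₊ * 1)
      (fun θ : ℝ => Real.cos θ • w0) := by
    have := (ContinuousLinearMap.toSpanSingleton ℝ w0).lipschitz.comp lipschitz_cos
    exact this
  have l1 : LipschitzWith (‖ContinuousLinearMap.toSpanSingleton ℝ w1‖₊ * 1)
      (fun θ : ℝ => Real.sin θ • w1) := by
    have := (ContinuousLinearMap.toSpanSingleton ℝ w1).lipschitz.comp lipschitz_sin
    exact this
  have lφ : LipschitzWith (‖ContinuousLinearMap.toSpanSingleton ℝ w0‖₊ * 1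
      + ‖ContinuousLinearMap.toSpanSingleton ℝ w1‖₊ * 1) φ := l0.add l1
  -- subset
  have hsub : (W : Set (EuclideanSpace ℝ (Fin 3))) ∩ Metric.sphere 0 1
      ⊆ φ '' Set.Icc (-π) π := by
    rintro x ⟨hxW, hxs⟩
    have hnx : ‖x‖ = 1 := by
      rwa [mem_sphere_zero_iff_norm] at hxs
    set y : W := ⟨x, hxW⟩ with hy
    set s : ℝ := o.repr y 0 with hs
    set t : ℝ := o.repr y 1 with ht
    have hny : ‖y‖ = 1 := hnx
    have hst : s ^ 2 + t ^ 2 = 1 := by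
      have h1 : ‖o.repr y‖ = ‖y‖ := o.repr.norm_map y
      have h2 := EuclideanSpace.norm_eq (o.repr y)
      rw [Fin.sum_univ_two] at h2
      rw [h1, hny] at h2
      have h3 : Real.sqrt (‖s‖ ^ 2 + ‖t‖ ^ 2) = 1 := h2.symm
      rw [Real.norm_eq_abs, Real.norm_eq_abs, sq_abs, sq_abs] at h3
      have h4 : (0:ℝ) ≤ s ^ 2 + t ^ 2 := by positivity
      nlinarith [Real.sq_sqrt h4]
    have hx_eq : x = s • w0 + t • w1 := by
      have h1 := o.sum_repr y
      rw [Fin.sum_univ_two] at h1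
      have := congrArg (Subtype.val) h1
      simpa [hw0, hw1] using this.symm
    set z : ℂ := ⟨s, t⟩ with hz
    have habs : ‖z‖ = 1 := by
      rw [Complex.norm_def, Complex.normSq_mk]
      rw [show s * s + t * t = s ^ 2 + t ^ 2 by ring, hst, Real.sqrt_one]
    have hz0 : z ≠ 0 := by
      intro h
      rw [h, norm_zero] at habs
      norm_num at habs
    refine ⟨Complex.arg z, ⟨(Complex.neg_pi_lt_arg z).le, Complex.arg_le_pi z⟩, ?_⟩
    have hcos : Real.cos (Complex.arg z) = s := by
      rw [Complex.cos_arg hz0, habs]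
      simp [hz]
    have hsin : Real.sin (Complex.arg z) = t := by
      rw [Complex.sin_arg, habs]
      simp [hz]
    rw [hφ]
    simp only [hcos, hsin]
    exact hx_eq.symm
  -- measure bound
  have hIcc : μH[2] (Set.Icc (-π) π : Set ℝ) = 0 := by
    rcases MeasureTheory.Measure.hausdorffMeasure_zero_or_top
      (show (1:ℝ) < 2 by norm_num) (Set.Icc (-π) π : Set ℝ) with h | h
    · exact h
    · exfalso
      rw [MeasureTheory.hausdorffMeasure_real] at h
      simp [Real.volume_Icc] at h
  have hb := lφ.hausdorffMeasure_image_le (show (0:ℝ) ≤ 2 by norm_num) (Set.Icc (-π) π)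
  rw [hIcc, mul_zero] at hb
  exact le_antisymm (le_trans (measure_mono hsub) hb) zero_le

lemma key_pointwise (v₁ v₂ v₃ u : EuclideanSpace ℝ (Fin 3))
    (hli : LinearIndependent ℝ ![v₁, v₂, v₃]) (hu : ‖u‖ = 1)
    (hW1 : u ∉ Submodule.span ℝ {v₂, v₃})
    (hW2 : u ∉ Submodule.span ℝ {v₁, v₃})
    (hW3 : u ∉ Submodule.span ℝ {v₁, v₂}) :
    Xor' (Submodule.orthogonalProjection (ℝ ∙ u)ᗮ '' {x | ∃ t₁ t₂ t₃ : ℝ, 0 ≤ t₁ ∧ 0 ≤ t₂ ∧ 0 ≤ t₃ ∧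
        x = t₁ • v₁ + t₂ • v₂ + t₃ • v₃} = Set.univ)
      (∃ w₁ w₂ : (ℝ ∙ u)ᗮ, LinearIndependent ℝ ![w₁, w₂] ∧
        Submodule.orthogonalProjection (ℝ ∙ u)ᗮ '' {x | ∃ t₁ t₂ t₃ : ℝ, 0 ≤ t₁ ∧ 0 ≤ t₂ ∧ 0 ≤ t₃ ∧
          x = t₁ • v₁ + t₂ • v₂ + t₃ • v₃}
          = {x | ∃ s t : ℝ, 0 ≤ s ∧ 0 ≤ t ∧ x = s • w₁ + t • w₂}) := by
  have hu0 : u ≠ 0 := by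
    intro h
    rw [h, norm_zero] at hu
    norm_num at hu
  have hcard : Fintype.card (Fin 3) = Module.finrank ℝ (EuclideanSpace ℝ (Fin 3)) := by
    simp [finrank_euclideanSpace]
  set b := basisOfLinearIndependentOfCardEqFinrank hli hcard with hb
  have hb0 : b 0 = v₁ := by
    rw [show ⇑b = ![v₁, v₂, v₃] from coe_basisOfLinearIndependentOfCardEqFinrank hli hcard]; rfl
  have hb1 : b 1 = v₂ := by
    rw [show ⇑b = ![v₁, v₂, v₃] from coe_basisOfLinearIndependentOfCardEqFinrank hli hcard]; rfl
  have hb2 : b 2 = v₃ := by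
    rw [show ⇑b = ![v₁, v₂, v₃] from coe_basisOfLinearIndependentOfCardEqFinrank hli hcard]; rfl
  set a₁ := b.repr u 0
  set a₂ := b.repr u 1
  set a₃ := b.repr u 2
  have hu_eq : u = a₁ • v₁ + a₂ • v₂ + a₃ • v₃ := by
    have := b.sum_repr u
    rw [Fin.sum_univ_three, hb0, hb1, hb2] at this
    exact this.symm
  have ha₁ : a₁ ≠ 0 := by
    intro h
    apply hW1
    rw [hu_eq, h, zero_smul, zero_add]
    exact add_mem (Submodule.smul_mem _ _ (Submodule.subset_span (by simp)))
      (Submodule.smul_mem _ _ (Submodule.subset_span (by simp)))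
  have ha₂ : a₂ ≠ 0 := by
    intro h
    apply hW2
    rw [hu_eq, h, zero_smul, add_zero]
    exact add_mem (Submodule.smul_mem _ _ (Submodule.subset_span (by simp)))
      (Submodule.smul_mem _ _ (Submodule.subset_span (by simp)))
  have ha₃ : a₃ ≠ 0 := by
    intro h
    apply hW3
    rw [hu_eq, h, zero_smul, add_zero]
    exact add_mem (Submodule.smul_mem _ _ (Submodule.subset_span (by simp)))
      (Submodule.smul_mem _ _ (Submodule.subset_span (by simp)))
  set K := (ℝ ∙ u)ᗮ with hK
  set P := Submodule.orthogonalProjection K with hP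
  have hker : ∀ x : EuclideanSpace ℝ (Fin 3), P x = 0 ↔ x ∈ ℝ ∙ u := by
    intro x
    rw [hP, Submodule.orthogonalProjectionOnto_eq_zero_iff, hK, Submodule.orthogonal_orthogonal]
  have hfr : Module.finrank ℝ K = 2 := by
    have h1 := Submodule.finrank_add_finrank_orthogonal (ℝ ∙ u)
    rw [finrank_span_singleton hu0] at h1
    have h3 : Module.finrank ℝ (EuclideanSpace ℝ (Fin 3)) = 3 := by simp [finrank_euclideanSpace]
    rw [h3] at h1
    rw [hK]
    omega
  have hsum : a₁ • P v₁ + a₂ • P v₂ + a₃ • P v₃ = 0 := by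
    have h0 : P u = 0 := (hker u).mpr (Submodule.mem_span_singleton_self u)
    rw [hu_eq] at h0
    simpa [map_add, _root_.map_smul] using h0
  -- pairwise linear independence of projections
  have h12 : LinearIndependent ℝ ![P v₁, P v₂] := by
    rw [LinearIndependent.pair_iff]
    intro s t hst
    have hPz : P (s • v₁ + t • v₂) = 0 := by
      simp only [map_add, _root_.map_smul]
      exact hst
    obtain ⟨c, hc⟩ := Submodule.mem_span_singleton.mp ((hker _).mp hPz)
    have hz : (c * a₁ - s) • v₁ + (c * a₂ - t) • v₂ + (c * a₃) • v₃ = 0 := by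
      calc (c * a₁ - s) • v₁ + (c * a₂ - t) • v₂ + (c * a₃) • v₃
          = c • (a₁ • v₁ + a₂ • v₂ + a₃ • v₃) - (s • v₁ + t • v₂) := by module
        _ = c • u - (s • v₁ + t • v₂) := by rw [← hu_eq]
        _ = 0 := by rw [hc, sub_self]
    obtain ⟨hp, hq, hr⟩ := (li3_iff v₁ v₂ v₃).mp hli _ _ _ hz
    have hc0 : c = 0 := by
      rcases mul_eq_zero.mp hr with h | h
      · exact h
      · exact absurd h ha₃
    rw [hc0, zero_mul, zero_sub, neg_eq_zero] at hp hq
    exact ⟨hp, hq⟩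
  have h13 : LinearIndependent ℝ ![P v₁, P v₃] := by
    rw [LinearIndependent.pair_iff]
    intro s t hst
    have hPz : P (s • v₁ + t • v₃) = 0 := by
      simp only [map_add, _root_.map_smul]
      exact hst
    obtain ⟨c, hc⟩ := Submodule.mem_span_singleton.mp ((hker _).mp hPz)
    have hz : (c * a₁ - s) • v₁ + (c * a₂) • v₂ + (c * a₃ - t) • v₃ = 0 := by
      calc (c * a₁ - s) • v₁ + (c * a₂) • v₂ + (c * a₃ - t) • v₃
          = c • (a₁ • v₁ + a₂ • v₂ + a₃ • v₃) - (s • v₁ + t • v₃) := by module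
        _ = c • u - (s • v₁ + t • v₃) := by rw [← hu_eq]
        _ = 0 := by rw [hc, sub_self]
    obtain ⟨hp, hq, hr⟩ := (li3_iff v₁ v₂ v₃).mp hli _ _ _ hz
    have hc0 : c = 0 := by
      rcases mul_eq_zero.mp hq with h | h
      · exact h
      · exact absurd h ha₂
    rw [hc0, zero_mul, zero_sub, neg_eq_zero] at hp hr
    exact ⟨hp, hr⟩
  have h23 : LinearIndependent ℝ ![P v₂, P v₃] := by
    rw [LinearIndependent.pair_iff]
    intro s t hst
    have hPz : P (s • v₂ + t • v₃) = 0 := by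
      simp only [map_add, _root_.map_smul]
      exact hst
    obtain ⟨c, hc⟩ := Submodule.mem_span_singleton.mp ((hker _).mp hPz)
    have hz : (c * a₁) • v₁ + (c * a₂ - s) • v₂ + (c * a₃ - t) • v₃ = 0 := by
      calc (c * a₁) • v₁ + (c * a₂ - s) • v₂ + (c * a₃ - t) • v₃
          = c • (a₁ • v₁ + a₂ • v₂ + a₃ • v₃) - (s • v₂ + t • v₃) := by module
        _ = c • u - (s • v₂ + t • v₃) := by rw [← hu_eq]
        _ = 0 := by rw [hc, sub_self]
    obtain ⟨hp, hq, hr⟩ := (li3_iff v₁ v₂ v₃).mp hli _ _ _ hz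
    have hc0 : c = 0 := by
      rcases mul_eq_zero.mp hp with h | h
      · exact h
      · exact absurd h ha₁
    rw [hc0, zero_mul, zero_sub, neg_eq_zero] at hq hr
    exact ⟨hq, hr⟩
  have himg : P '' {x | ∃ t₁ t₂ t₃ : ℝ, 0 ≤ t₁ ∧ 0 ≤ t₂ ∧ 0 ≤ t₃ ∧
      x = t₁ • v₁ + t₂ • v₂ + t₃ • v₃} = coneSet3 (P v₁) (P v₂) (P v₃) := by
    ext y
    constructor
    · rintro ⟨x, ⟨t₁, t₂, t₃, h₁, h₂, h₃, rfl⟩, rfl⟩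
      exact ⟨t₁, t₂, t₃, h₁, h₂, h₃, by simp [map_add, _root_.map_smul]⟩
    · rintro ⟨t₁, t₂, t₃, h₁, h₂, h₃, rfl⟩
      exact ⟨t₁ • v₁ + t₂ • v₂ + t₃ • v₃, ⟨t₁, t₂, t₃, h₁, h₂, h₃, rfl⟩,
        by simp [map_add, _root_.map_smul]⟩
  rw [himg]
  exact coneXor hfr (P v₁) (P v₂) (P v₃) a₁ a₂ a₃ ha₁ ha₂ ha₃ hsum h12 h13 h23

/-- For almost every unit direction `u` (w.r.t. the spherical surface measure), exactly
one of the following holds: the projection of the cone `C` onto `u^⊥` is all of `u^⊥`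
(0 vertices, 0 edges), or it is a planar convex cone generated by two linearly
independent vectors of `u^⊥` (1 vertex, 2 edges). Hence the number of edges of the
projection is almost surely twice the number of vertices. -/
theorem projection_ae_plane_or_planar_cone
    (v₁ v₂ v₃ : EuclideanSpace ℝ (Fin 3))
    (hv₁ : ‖v₁‖ = 1) (hv₂ : ‖v₂‖ = 1) (hv₃ : ‖v₃‖ = 1)
    (hli : LinearIndependent ℝ ![v₁, v₂, v₃])
    (C : Set (EuclideanSpace ℝ (Fin 3)))
    (hC : C = {x | ∃ t₁ t₂ t₃ : ℝ, 0 ≤ t₁ ∧ 0 ≤ t₂ ∧ 0 ≤ t₃ ∧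
        x = t₁ • v₁ + t₂ • v₂ + t₃ • v₃}) :
    ∀ᵐ u ∂(μH[2].restrict (Metric.sphere (0 : EuclideanSpace ℝ (Fin 3)) 1)),
      Xor' (Submodule.orthogonalProjection (ℝ ∙ u)ᗮ '' C = Set.univ)
        (∃ w₁ w₂ : (ℝ ∙ u)ᗮ, LinearIndependent ℝ ![w₁, w₂] ∧
          Submodule.orthogonalProjection (ℝ ∙ u)ᗮ '' C
            = {x | ∃ s t : ℝ, 0 ≤ s ∧ 0 ≤ t ∧ x = s • w₁ + t • w₂}) := by
  subst hC
  set S := Metric.sphere (0 : EuclideanSpace ℝ (Fin 3)) 1 with hS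
  have hSmeas : MeasurableSet S := Metric.isClosed_sphere.measurableSet
  -- pair linear independence
  have li23 : LinearIndependent ℝ ![v₂, v₃] := by
    rw [LinearIndependent.pair_iff]
    intro s t h
    have := (li3_iff v₁ v₂ v₃).mp hli 0 s t (by rw [zero_smul, zero_add]; exact h)
    exact ⟨this.2.1, this.2.2⟩
  have li13 : LinearIndependent ℝ ![v₁, v₃] := by
    rw [LinearIndependent.pair_iff]
    intro s t h
    have := (li3_iff v₁ v₂ v₃).mp hli s 0 t
      (by rw [zero_smul, add_zero]; exact h)
    exact ⟨this.1, this.2.2⟩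
  have li12 : LinearIndependent ℝ ![v₁, v₂] := by
    rw [LinearIndependent.pair_iff]
    intro s t h
    have := (li3_iff v₁ v₂ v₃).mp hli s t 0
      (by rw [zero_smul, add_zero]; exact h)
    exact ⟨this.1, this.2.1⟩
  have hrange : ∀ (a b : EuclideanSpace ℝ (Fin 3)), Set.range ![a, b] = {a, b} := by
    intro a b
    ext x
    simp [Matrix.range_cons, Matrix.range_empty, or_comm]
  have hfr : ∀ (a b : EuclideanSpace ℝ (Fin 3)), LinearIndependent ℝ ![a, b] →
      Module.finrank ℝ (Submodule.span ℝ {a, b}) = 2 := by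
    intro a b hab
    have := finrank_span_eq_card hab
    rw [hrange a b] at this
    simpa using this
  set W1 := Submodule.span ℝ {v₂, v₃} with hW1
  set W2 := Submodule.span ℝ {v₁, v₃} with hW2
  set W3 := Submodule.span ℝ {v₁, v₂} with hW3
  have hbad : (μH[2].restrict S)
      ((W1 : Set (EuclideanSpace ℝ (Fin 3))) ∪ W2 ∪ W3) = 0 := by
    rw [Measure.restrict_apply' hSmeas]
    refine le_antisymm ?_ zero_le
    rw [Set.union_inter_distrib_right, Set.union_inter_distrib_right]
    calc μH[2] (((W1 : Set (EuclideanSpace ℝ (Fin 3))) ∩ S ∪ (W2 : Set _) ∩ S)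
          ∪ (W3 : Set _) ∩ S)
        ≤ μH[2] ((W1 : Set (EuclideanSpace ℝ (Fin 3))) ∩ S ∪ (W2 : Set _) ∩ S)
          + μH[2] ((W3 : Set _) ∩ S) := measure_union_le _ _
      _ ≤ (μH[2] ((W1 : Set (EuclideanSpace ℝ (Fin 3))) ∩ S)
          + μH[2] ((W2 : Set _) ∩ S)) + μH[2] ((W3 : Set _) ∩ S) := by
          gcongr
          exact measure_union_le _ _
      _ = 0 := by
          rw [hS, circle_null W1 (hfr _ _ li23), circle_null W2 (hfr _ _ li13),
            circle_null W3 (hfr _ _ li12)]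
          simp
  have hae : ∀ᵐ u ∂(μH[2].restrict S),
      u ∉ ((W1 : Set (EuclideanSpace ℝ (Fin 3))) ∪ W2 ∪ W3) := by
    rw [ae_iff]
    simpa only [not_not, Set.setOf_mem_eq] using hbad
  filter_upwards [hae, ae_restrict_mem hSmeas] with u hu huS
  have hnu : ‖u‖ = 1 := by rwa [hS, mem_sphere_zero_iff_norm] at huS
  exact key_pointwise v₁ v₂ v₃ u hli hnu
    (fun h => hu (Or.inl (Or.inl h))) (fun h => hu (Or.inl (Or.inr h)))
    (fun h => hu (Or.inr h))
end
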